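/- Let m be a positive integer and R a commutative ring which is an ℝ-algebra. Let g ∈ Mₘ(R) be symmetric and invertible, ζ ∈ R^{1×m}, z ∈ R invertible, and define W̄ := [[z, zζ, ½ z⁻¹ ζ g⁻¹ ζᵀ],[0, z·1ₘ, z⁻¹ g⁻¹ ζᵀ],[0, 0, z⁻¹]] (blocks of sizes (1, m, 1)). Let C ∈ R^{1×m} and W ∈ Mₘ(R) with Wᵀg = −gW, and set Ω₀ := [[0, C, 0],[0, W, g⁻¹Cᵀ],[0, 0, 0]]. Then W̄⁻¹ · Ω₀ · W̄ = [[0, C − ζW, 0],[0, W, z⁻² g⁻¹ (C − ζW)ᵀ],[0, 0, 0]]. In particular, in the normal (torsion-free, Ricci-null) case, the Weyl tensor block W is invariant under Weyl rescaling, and the Cotton block transforms as C ↦ C − ζW. -/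

import Mathlib

open Matrix

/-- 3×3 block matrix with block sizes (1, m, 1). -/
def B3 {R : Type*} {m : ℕ}
    (a11 : Matrix (Fin 1) (Fin 1) R) (a12 : Matrix (Fin 1) (Fin m) R) (a13 : Matrix (Fin 1) (Fin 1) R)
    (a21 : Matrix (Fin m) (Fin 1) R) (a22 : Matrix (Fin m) (Fin m) R) (a23 : Matrix (Fin m) (Fin 1) R)
    (a31 : Matrix (Fin 1) (Fin 1) R) (a32 : Matrix (Fin 1) (Fin m) R) (a33 : Matrix (Fin 1) (Fin 1) R) :
    Matrix (Fin 1 ⊕ (Fin m ⊕ Fin 1)) (Fin 1 ⊕ (Fin m ⊕ Fin 1)) R :=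
  Matrix.fromBlocks a11 (Matrix.fromCols a12 a13) (Matrix.fromRows a21 a31)
    (Matrix.fromBlocks a22 a23 a32 a33)

/-- Block extractors for a 3×3 block matrix with block sizes (1, m, 1). -/
def blk11 {R : Type*} {m : ℕ} (M : Matrix (Fin 1 ⊕ (Fin m ⊕ Fin 1)) (Fin 1 ⊕ (Fin m ⊕ Fin 1)) R) :
    Matrix (Fin 1) (Fin 1) R := M.submatrix Sum.inl Sum.inl
def blk12 {R : Type*} {m : ℕ} (M : Matrix (Fin 1 ⊕ (Fin m ⊕ Fin 1)) (Fin 1 ⊕ (Fin m ⊕ Fin 1)) R) :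
    Matrix (Fin 1) (Fin m) R := M.submatrix Sum.inl (fun j => Sum.inr (Sum.inl j))
def blk13 {R : Type*} {m : ℕ} (M : Matrix (Fin 1 ⊕ (Fin m ⊕ Fin 1)) (Fin 1 ⊕ (Fin m ⊕ Fin 1)) R) :
    Matrix (Fin 1) (Fin 1) R := M.submatrix Sum.inl (fun j => Sum.inr (Sum.inr j))
def blk21 {R : Type*} {m : ℕ} (M : Matrix (Fin 1 ⊕ (Fin m ⊕ Fin 1)) (Fin 1 ⊕ (Fin m ⊕ Fin 1)) R) :
    Matrix (Fin m) (Fin 1) R := M.submatrix (fun i => Sum.inr (Sum.inl i)) Sum.inl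
def blk22 {R : Type*} {m : ℕ} (M : Matrix (Fin 1 ⊕ (Fin m ⊕ Fin 1)) (Fin 1 ⊕ (Fin m ⊕ Fin 1)) R) :
    Matrix (Fin m) (Fin m) R := M.submatrix (fun i => Sum.inr (Sum.inl i)) (fun j => Sum.inr (Sum.inl j))
def blk23 {R : Type*} {m : ℕ} (M : Matrix (Fin 1 ⊕ (Fin m ⊕ Fin 1)) (Fin 1 ⊕ (Fin m ⊕ Fin 1)) R) :
    Matrix (Fin m) (Fin 1) R := M.submatrix (fun i => Sum.inr (Sum.inl i)) (fun j => Sum.inr (Sum.inr j))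
def blk31 {R : Type*} {m : ℕ} (M : Matrix (Fin 1 ⊕ (Fin m ⊕ Fin 1)) (Fin 1 ⊕ (Fin m ⊕ Fin 1)) R) :
    Matrix (Fin 1) (Fin 1) R := M.submatrix (fun i => Sum.inr (Sum.inr i)) Sum.inl
def blk32 {R : Type*} {m : ℕ} (M : Matrix (Fin 1 ⊕ (Fin m ⊕ Fin 1)) (Fin 1 ⊕ (Fin m ⊕ Fin 1)) R) :
    Matrix (Fin 1) (Fin m) R := M.submatrix (fun i => Sum.inr (Sum.inr i)) (fun j => Sum.inr (Sum.inl j))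
def blk33 {R : Type*} {m : ℕ} (M : Matrix (Fin 1 ⊕ (Fin m ⊕ Fin 1)) (Fin 1 ⊕ (Fin m ⊕ Fin 1)) R) :
    Matrix (Fin 1) (Fin 1) R := M.submatrix (fun i => Sum.inr (Sum.inr i)) (fun j => Sum.inr (Sum.inr j))

lemma fromColumns_add' {R : Type*} [AddCommMonoid R] {n m₁ m₂ : Type*}
    (A₁ B₁ : Matrix n m₁ R) (A₂ B₂ : Matrix n m₂ R) :
    fromCols A₁ A₂ + fromCols B₁ B₂ = fromCols (A₁ + B₁) (A₂ + B₂) := by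
  ext i (j | j) <;> simp [Matrix.fromCols, Matrix.fromCols_apply_inl, Matrix.fromCols_apply_inr]

lemma fromRows_add' {R : Type*} [AddCommMonoid R] {n m₁ m₂ : Type*}
    (A₁ B₁ : Matrix m₁ n R) (A₂ B₂ : Matrix m₂ n R) :
    fromRows A₁ A₂ + fromRows B₁ B₂ = fromRows (A₁ + B₁) (A₂ + B₂) := by
  ext (i | i) j <;> simp [Matrix.fromRows_apply_inl, Matrix.fromRows_apply_inr]

lemma B3_mul {R : Type*} [CommRing R] {m : ℕ}
    (a11 a13 a31 a33 b11 b13 b31 b33 : Matrix (Fin 1) (Fin 1) R)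
    (a12 a32 b12 b32 : Matrix (Fin 1) (Fin m) R)
    (a21 a23 b21 b23 : Matrix (Fin m) (Fin 1) R)
    (a22 b22 : Matrix (Fin m) (Fin m) R) :
    B3 a11 a12 a13 a21 a22 a23 a31 a32 a33 * B3 b11 b12 b13 b21 b22 b23 b31 b32 b33
      = B3 (a11*b11 + a12*b21 + a13*b31) (a11*b12 + a12*b22 + a13*b32) (a11*b13 + a12*b23 + a13*b33)
           (a21*b11 + a22*b21 + a23*b31) (a21*b12 + a22*b22 + a23*b32) (a21*b13 + a22*b23 + a23*b33)
           (a31*b11 + a32*b21 + a33*b31) (a31*b12 + a32*b22 + a33*b32) (a31*b13 + a32*b23 + a33*b33) := by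
  simp only [B3, Matrix.fromBlocks_multiply, Matrix.fromCols_mul_fromRows,
    Matrix.fromCols_mul_fromBlocks, Matrix.fromBlocks_mul_fromRows,
    Matrix.fromRows_mul, Matrix.mul_fromCols, Matrix.fromRows_mul_fromCols]
  simp only [B3, Matrix.fromBlocks_multiply, Matrix.fromCols_mul_fromRows,
    Matrix.fromCols_mul_fromBlocks, Matrix.fromBlocks_mul_fromRows,
    Matrix.fromRows_mul, Matrix.mul_fromCols, Matrix.fromRows_mul_fromCols,
    fromColumns_add', fromRows_add', Matrix.fromBlocks_add,
    Matrix.fromCols_fromRows_eq_fromBlocks, add_assoc]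

lemma one_one_transpose {R : Type*} (M : Matrix (Fin 1) (Fin 1) R) : M.transpose = M := by
  ext i j; fin_cases i; fin_cases j; rfl

lemma fromRows_zero' {R : Type*} [Zero R] {n m₁ m₂ : Type*} :
    (fromRows (0 : Matrix m₁ n R) (0 : Matrix m₂ n R)) = 0 := by
  ext (i | i) j <;> simp

/-- In the normal (torsion-free, Ricci-null) case, the residual Weyl transform of the
dressed curvature `Ω₀ = [[0, C, 0],[0, W, g⁻¹Cᵀ],[0, 0, 0]]` is
`W̄⁻¹ Ω₀ W̄ = [[0, C − ζW, 0],[0, W, z⁻²g⁻¹(C − ζW)ᵀ],[0, 0, 0]]`: the Weyl tensor block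
`W` is invariant and the Cotton block transforms as `C ↦ C − ζW`. -/
theorem stmt_13 (m : ℕ) (hm : 0 < m) (R : Type*) [CommRing R] [Algebra ℝ R]
    (g : Matrix (Fin m) (Fin m) R) (hgsymm : g.transpose = g) (hg : IsUnit g.det)
    (ζ : Matrix (Fin 1) (Fin m) R) (z zi : R) (hz : z * zi = 1)
    (C : Matrix (Fin 1) (Fin m) R) (W : Matrix (Fin m) (Fin m) R)
    (hW : W.transpose * g = -(g * W)) :
    let Wb := B3 (z • 1) (z • ζ) ((2⁻¹ : ℝ) • (zi • (ζ * g⁻¹ * ζ.transpose)))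
        0 (z • (1 : Matrix (Fin m) (Fin m) R)) (zi • (g⁻¹ * ζ.transpose)) 0 0 (zi • 1);
    let Ω₀ := B3 0 C 0 0 W (g⁻¹ * C.transpose) 0 0 0;
    Wb⁻¹ * Ω₀ * Wb
      = B3 0 (C - ζ * W) 0 0 W ((zi * zi) • (g⁻¹ * (C - ζ * W).transpose)) 0 0 0 := by
  intro Wb Ω₀
  have hzi : zi * z = 1 := by rw [mul_comm]; exact hz
  have hgg : g⁻¹ * g = 1 := Matrix.nonsing_inv_mul g hg
  have hgg' : g * g⁻¹ = 1 := Matrix.mul_nonsing_inv g hg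
  have hgi : g⁻¹.transpose = g⁻¹ := by
    rw [Matrix.transpose_nonsing_inv, hgsymm]
  have hWgi : g⁻¹ * W.transpose = -(W * g⁻¹) := by
    have h := congrArg (fun M => g⁻¹ * M * g⁻¹) hW
    simp only [Matrix.mul_assoc, Matrix.mul_neg, Matrix.neg_mul] at h
    rw [hgg', Matrix.mul_one, ← Matrix.mul_assoc g⁻¹ g, hgg, Matrix.one_mul] at h
    rw [h]
  have hx : ζ * W * g⁻¹ * ζ.transpose = 0 := by
    set x := ζ * W * g⁻¹ * ζ.transpose with hxdef
    have h1 : x.transpose = -x := by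
      rw [hxdef]
      simp only [Matrix.transpose_mul, Matrix.transpose_transpose, hgi]
      calc ζ * (g⁻¹ * (W.transpose * ζ.transpose)) 
          = ζ * ((g⁻¹ * W.transpose) * ζ.transpose) := by rw [Matrix.mul_assoc]
        _ = -(ζ * W * g⁻¹ * ζ.transpose) := by
            rw [hWgi]; simp [Matrix.mul_assoc]
    have h2 : x + x = 0 := by
      have := one_one_transpose x
      rw [this] at h1
      linear_combination (norm := abel) h1
    have h3 : ((2 : ℝ) • x) = 0 := by rw [two_smul]; exact h2
    calc x = ((2 : ℝ)⁻¹ * 2) • x := by norm_num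
      _ = (2 : ℝ)⁻¹ • ((2 : ℝ) • x) := mul_smul _ _ _
      _ = 0 := by rw [h3, smul_zero]
  set C' := C - ζ * W with hC'
  set T := B3 0 C' 0 0 W ((zi * zi) • (g⁻¹ * C'.transpose)) 0 0 0 with hT
  have hCg : C * g⁻¹ * ζ.transpose = ζ * g⁻¹ * C.transpose := by
    have := one_one_transpose (ζ * g⁻¹ * C.transpose)
    rw [← this]
    simp [Matrix.transpose_mul, hgi, Matrix.mul_assoc]
  have key : Ω₀ * Wb = Wb * T := by
    rw [show Ω₀ = B3 0 C 0 0 W (g⁻¹ * C.transpose) 0 0 0 from rfl,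
        show Wb = B3 (z • 1) (z • ζ) ((2⁻¹ : ℝ) • (zi • (ζ * g⁻¹ * ζ.transpose)))
          0 (z • (1 : Matrix (Fin m) (Fin m) R)) (zi • (g⁻¹ * ζ.transpose)) 0 0 (zi • 1) from rfl,
        hT, B3_mul, B3_mul]
    have hgC' : g⁻¹ * C'.transpose = g⁻¹ * C.transpose + W * (g⁻¹ * ζ.transpose) := by
      rw [hC', Matrix.transpose_sub, Matrix.mul_sub, Matrix.transpose_mul,
        ← Matrix.mul_assoc, hWgi]
      simp [Matrix.mul_assoc, sub_neg_eq_add]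
    have hscal : zi * zi * z = zi := by rw [mul_assoc, hzi, mul_one]
    have e12 : z • C = z • C' + z • (ζ * W) := by rw [hC', smul_sub]; abel
    have e13 : zi • (C * (g⁻¹ * ζ.transpose)) = (zi * zi) • z • (ζ * (g⁻¹ * C'.transpose)) := by
      rw [smul_smul, hscal, hgC', Matrix.mul_add]
      have h0 : ζ * (W * (g⁻¹ * ζ.transpose)) = 0 := by
        have := hx; rw [Matrix.mul_assoc, Matrix.mul_assoc] at this; exact this
      rw [h0, add_zero]
      congr 1
      have := hCg; rw [Matrix.mul_assoc, Matrix.mul_assoc] at this; exact this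
    have e23 : zi • (W * (g⁻¹ * ζ.transpose)) + zi • (g⁻¹ * C.transpose)
        = (zi * zi) • z • (g⁻¹ * C'.transpose) := by
      rw [smul_smul, hscal, hgC', smul_add]; abel
    simp only [Matrix.zero_mul, Matrix.mul_zero, Matrix.smul_mul, Matrix.mul_smul,
      Matrix.one_mul, Matrix.mul_one, add_zero, zero_add, smul_zero]
    rw [e12, e13, e23]
  have hdet : IsUnit Wb.det := by
    have hWb : Wb = Matrix.fromBlocks (z • 1)
        (Matrix.fromCols (z • ζ) ((2⁻¹ : ℝ) • (zi • (ζ * g⁻¹ * ζ.transpose))))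
        0 (Matrix.fromBlocks (z • (1 : Matrix (Fin m) (Fin m) R)) (zi • (g⁻¹ * ζ.transpose)) 0 (zi • 1)) := by
      rw [show Wb = B3 _ _ _ _ _ _ _ _ _ from rfl]
      unfold B3
      rw [fromRows_zero']
    rw [hWb, Matrix.det_fromBlocks_zero₂₁, Matrix.det_fromBlocks_zero₂₁]
    simp only [Matrix.det_smul, Matrix.det_one, Fintype.card_fin, mul_one]
    exact ((IsUnit.of_mul_eq_one zi hz).pow 1).mul
      (((IsUnit.of_mul_eq_one zi hz).pow m).mul ((IsUnit.of_mul_eq_one z hzi).pow 1))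
  calc Wb⁻¹ * Ω₀ * Wb = Wb⁻¹ * (Wb * T) := by rw [Matrix.mul_assoc, key]
    _ = T := by rw [← Matrix.mul_assoc, Matrix.nonsing_inv_mul Wb hdet, Matrix.one_mul]
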